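/- Let A be an n×n complex Hermitian matrix whose span is less than 4 and all of whose eigenvalues lie in the interval [−2, 2.5). Then every diagonal entry a of A satisfies |a| < 2.5, and every off-diagonal entry b of A satisfies |b| < 2. -/

import Mathlib

/-- a small-span Hermitian matrix with all eigenvalues in [-2, 2.5)
has all diagonal entries of absolute value < 2.5 and all off-diagonal entries of
absolute value < 2. -/
theorem stmt_2 (n : ℕ) (A : Matrix (Fin n) (Fin n) ℂ) (hA : A.IsHermitian)
    (hspan : ∀ i j, hA.eigenvalues i - hA.eigenvalues j < 4)
    (heig : ∀ i, hA.eigenvalues i ∈ Set.Ico (-2 : ℝ) (2.5 : ℝ)) :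
    (∀ i, ‖A i i‖ < 2.5) ∧
    (∀ i j, i ≠ j → ‖A i j‖ < 2) := by
  set U : Matrix (Fin n) (Fin n) ℂ := (hA.eigenvectorUnitary : Matrix (Fin n) (Fin n) ℂ) with hUdef
  set lam : Fin n → ℝ := hA.eigenvalues with hlam
  have hU : U * star U = 1 := Matrix.mem_unitaryGroup_iff.mp hA.eigenvectorUnitary.2
  have hrow : ∀ i j, ∑ k, U i k * (starRingEnd ℂ) (U j k)
      = (1 : Matrix (Fin n) (Fin n) ℂ) i j := by
    intro i j
    have := congrFun (congrFun hU i) j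
    simpa [Matrix.mul_apply, Matrix.star_apply, mul_comm] using this
  have hentry : ∀ i j, A i j = ∑ k, U i k * (lam k : ℂ) * (starRingEnd ℂ) (U j k) := by
    intro i j
    conv_lhs => rw [hA.spectral_theorem, Unitary.conjStarAlgAut_apply]
    rw [Matrix.mul_apply]
    refine Finset.sum_congr rfl fun k _ => ?_
    rw [Matrix.mul_diagonal, Matrix.star_apply]
    simp [Function.comp, U, lam]
  have hnormrow : ∀ i, ∑ k, Complex.normSq (U i k) = 1 := by
    intro i
    have h := hrow i i
    rw [Matrix.one_apply_eq] at h
    have : ((∑ k, Complex.normSq (U i k) : ℝ) : ℂ) = 1 := by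
      push_cast
      rw [← h]
      exact Finset.sum_congr rfl fun k _ => (Complex.mul_conj (U i k)).symm
    exact_mod_cast this
  constructor
  · intro i
    -- diagonal entry is a real convex combination of eigenvalues
    set t : Fin n → ℝ := fun k => Complex.normSq (U i k) with ht
    have ht0 : ∀ k, 0 ≤ t k := fun k => Complex.normSq_nonneg _
    have hts : ∑ k, t k = 1 := hnormrow i
    have hAiir : A i i = ((∑ k, lam k * t k : ℝ) : ℂ) := by
      rw [hentry i i]
      push_cast
      refine Finset.sum_congr rfl fun k _ => ?_
      have : U i k * (starRingEnd ℂ) (U i k) = (t k : ℂ) := Complex.mul_conj (U i k)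
      calc U i k * (lam k : ℂ) * (starRingEnd ℂ) (U i k)
          = (lam k : ℂ) * (U i k * (starRingEnd ℂ) (U i k)) := by ring
        _ = (lam k : ℂ) * (t k : ℂ) := by rw [this]
    have hne : (Finset.univ : Finset (Fin n)).Nonempty := ⟨i, Finset.mem_univ i⟩
    set M : ℝ := Finset.univ.sup' hne lam with hM
    have hMlt : M < 2.5 := by
      rw [hM, Finset.sup'_lt_iff]
      exact fun k _ => (heig k).2
    have hub : ∑ k, lam k * t k ≤ M := by
      calc ∑ k, lam k * t k ≤ ∑ k, M * t k := by
            refine Finset.sum_le_sum fun k _ => ?_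
            exact mul_le_mul_of_nonneg_right (Finset.le_sup' lam (Finset.mem_univ k)) (ht0 k)
        _ = M * ∑ k, t k := by rw [Finset.mul_sum]
        _ = M := by rw [hts, mul_one]
    have hlb : -2 ≤ ∑ k, lam k * t k := by
      have h2 : ∑ k, (-2 : ℝ) * t k = -2 := by rw [← Finset.mul_sum, hts, mul_one]
      calc (-2 : ℝ) = ∑ k, -2 * t k := h2.symm
        _ ≤ ∑ k, lam k * t k := by
            refine Finset.sum_le_sum fun k _ => ?_
            exact mul_le_mul_of_nonneg_right (heig k).1 (ht0 k)
    rw [hAiir, Complex.norm_real, Real.norm_eq_abs]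
    rw [abs_lt]
    constructor <;> nlinarith [hub, hlb, hMlt]
  · intro i j hij
    have hne : (Finset.univ : Finset (Fin n)).Nonempty := ⟨i, Finset.mem_univ i⟩
    set M : ℝ := Finset.univ.sup' hne lam with hM
    set m : ℝ := Finset.univ.inf' hne lam with hm
    obtain ⟨kM, _, hkM⟩ := Finset.exists_mem_eq_sup' hne lam
    obtain ⟨km, _, hkm⟩ := Finset.exists_mem_eq_inf' hne lam
    have hMm : M - m < 4 := by rw [hM, hm, hkM, hkm]; exact hspan kM km
    have hmM : m ≤ M := le_trans (Finset.inf'_le lam (Finset.mem_univ i)) (Finset.le_sup' lam (Finset.mem_univ i))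
    set c : ℝ := (M + m) / 2 with hc
    have hdev : ∀ k, |lam k - c| ≤ (M - m) / 2 := by
      intro k
      have h1 : lam k ≤ M := Finset.le_sup' lam (Finset.mem_univ k)
      have h2 : m ≤ lam k := Finset.inf'_le lam (Finset.mem_univ k)
      rw [abs_le]; constructor <;> [skip; skip] <;> simp only [hc] <;> linarith
    -- off-diagonal entry equals sum with shifted eigenvalues
    have horth : ∑ k, U i k * (starRingEnd ℂ) (U j k) = 0 := by
      rw [hrow i j, Matrix.one_apply_ne hij]
    have hAij : A i j = ∑ k, U i k * ((lam k - c : ℝ) : ℂ) * (starRingEnd ℂ) (U j k) := by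
      rw [hentry i j]
      push_cast
      rw [eq_comm]
      calc ∑ k, U i k * ((lam k : ℂ) - (c : ℂ)) * (starRingEnd ℂ) (U j k)
          = (∑ k, U i k * (lam k : ℂ) * (starRingEnd ℂ) (U j k))
            - (c : ℂ) * ∑ k, U i k * (starRingEnd ℂ) (U j k) := by
            rw [Finset.mul_sum, ← Finset.sum_sub_distrib]
            refine Finset.sum_congr rfl fun k _ => by ring
        _ = ∑ k, U i k * (lam k : ℂ) * (starRingEnd ℂ) (U j k) := by rw [horth, mul_zero, sub_zero]
    -- Cauchy–Schwarz bound
    set f : Fin n → ℝ := fun k => ‖U i k‖ with hf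
    set g : Fin n → ℝ := fun k => ‖U j k‖ with hg
    have hf2 : ∑ k, f k ^ 2 = 1 := by
      rw [← hnormrow i]; exact Finset.sum_congr rfl fun k _ => Complex.sq_norm _
    have hg2 : ∑ k, g k ^ 2 = 1 := by
      rw [← hnormrow j]; exact Finset.sum_congr rfl fun k _ => Complex.sq_norm _
    have hCS : (∑ k, f k * g k) ^ 2 ≤ 1 := by
      have := Finset.sum_mul_sq_le_sq_mul_sq Finset.univ f g
      rwa [hf2, hg2, one_mul] at this
    have hfg0 : 0 ≤ ∑ k, f k * g k :=
      Finset.sum_nonneg fun k _ => mul_nonneg (norm_nonneg _) (norm_nonneg _)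
    have hfg1 : ∑ k, f k * g k ≤ 1 := by nlinarith
    have habs : ‖A i j‖ ≤ (M - m) / 2 := by
      rw [hAij]
      calc ‖∑ k, U i k * ((lam k - c : ℝ) : ℂ) * (starRingEnd ℂ) (U j k)‖
          ≤ ∑ k, ‖U i k * ((lam k - c : ℝ) : ℂ) * (starRingEnd ℂ) (U j k)‖ := by
            have := norm_sum_le Finset.univ
              (fun k => U i k * ((lam k - c : ℝ) : ℂ) * (starRingEnd ℂ) (U j k))
            exact this
        _ = ∑ k, f k * |lam k - c| * g k := by
            refine Finset.sum_congr rfl fun k _ => ?_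
            rw [norm_mul, norm_mul, Complex.norm_real, Real.norm_eq_abs, Complex.norm_conj]
        _ ≤ ∑ k, f k * ((M - m) / 2) * g k := by
            refine Finset.sum_le_sum fun k _ => ?_
            have := hdev k
            have hfk : 0 ≤ f k := norm_nonneg _
            have hgk : 0 ≤ g k := norm_nonneg _
            exact mul_le_mul_of_nonneg_right (mul_le_mul_of_nonneg_left this hfk) hgk
        _ = ((M - m) / 2) * ∑ k, f k * g k := by
            rw [Finset.mul_sum]; exact Finset.sum_congr rfl fun k _ => by ring
        _ ≤ (M - m) / 2 := by nlinarith
    linarith
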